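/- Let F be the oriented graph on five vertices u, v, w, x, y consisting of an antidirected path on three vertices with arcs u→w and v→w, together with one additional vertex-disjoint arc x→y. Then there exists N such that for all n ≥ N, exo(n, F) = 2n − 3. -/

import Mathlib

set_option linter.unreachableTactic false
set_option linter.unusedTactic false

/-- An oriented graph `G` contains a copy of the oriented graph `F`. -/
def Copies {α β : Type*} (F : α → α → Prop) (G : β → β → Prop) : Prop :=
  ∃ f : α → β, Function.Injective f ∧ ∀ a b, F a b → G (f a) (f b)

/-- The oriented Turán number. -/
noncomputable def exo {α : Type*} (n : ℕ) (F : α → α → Prop) : ℕ :=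
  sSup {m : ℕ | ∃ G : Fin n → Fin n → Prop,
    (∀ v, ¬ G v v) ∧ (∀ u v, G u v → ¬ G v u) ∧
    ¬ Copies F G ∧ {p : Fin n × Fin n | G p.1 p.2}.ncard = m}

/-- The oriented graph on five vertices `u = 0, v = 1, w = 2, x = 3, y = 4` with
arcs `u→w, v→w` (an antidirected `P₃`) and a vertex-disjoint arc `x→y`. -/
def antiP3plusArc (i j : Fin 5) : Prop :=
  (i = 0 ∧ j = 2) ∨ (i = 1 ∧ j = 2) ∨ (i = 3 ∧ j = 4)

open Finset

lemma key {n : ℕ} {G : Fin n → Fin n → Prop}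
    (hirr : ∀ v, ¬ G v v) (hfree : ¬ Copies antiP3plusArc G) {a b c x y : Fin n}
    (hab : a ≠ b) (hac : G a c) (hbc : G b c) (hxy : G x y)
    (hxa : x ≠ a) (hxb : x ≠ b) (hxc : x ≠ c)
    (hya : y ≠ a) (hyb : y ≠ b) (hyc : y ≠ c) : False := by
  apply hfree
  have hca : a ≠ c := fun h => hirr c (h ▸ hac)
  have hcb : b ≠ c := fun h => hirr c (h ▸ hbc)
  have hxy' : x ≠ y := fun h => hirr y (h ▸ hxy)
  have hba := hab.symm; have hac' := hca.symm; have hbc' := hcb.symm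
  have := hxa.symm; have := hxb.symm; have := hxc.symm
  have := hya.symm; have := hyb.symm; have := hyc.symm; have := hxy'.symm
  refine ⟨![a, b, c, x, y], ?_, ?_⟩
  · intro i j hij
    fin_cases i <;> fin_cases j <;> first | rfl | (exfalso; simp_all)
  · intro a' b' h
    rcases h with ⟨h1, h2⟩ | ⟨h1, h2⟩ | ⟨h1, h2⟩ <;> subst h1 <;> subst h2 <;>
      simpa using ‹_›

lemma upper {n : ℕ} (hn : 30 ≤ n) {G : Fin n → Fin n → Prop}
    (hirr : ∀ v, ¬ G v v) (hasym : ∀ u v, G u v → ¬ G v u)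
    (hfree : ¬ Copies antiP3plusArc G) :
    {p : Fin n × Fin n | G p.1 p.2}.ncard ≤ 2 * n - 3 := by
  classical
  have hset : {p : Fin n × Fin n | G p.1 p.2}
      = ↑(Finset.univ.filter fun p : Fin n × Fin n => G p.1 p.2) := by ext p; simp
  rw [hset, Set.ncard_coe_finset]
  set A := Finset.univ.filter fun p : Fin n × Fin n => G p.1 p.2 with hA
  by_contra hlt
  push_neg at hlt
  have hm : 2 * n - 2 ≤ A.card := by omega
  have memA : ∀ p : Fin n × Fin n, p ∈ A ↔ G p.1 p.2 := by intro p; simp [hA]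
  -- Step 1: a vertex with in-degree ≥ 2
  have hsum : A.card = ∑ w : Fin n, (A.filter fun p => p.2 = w).card :=
    card_eq_sum_card_fiberwise (fun p _ => mem_univ p.2)
  have h1 : ∃ w, 1 < (A.filter fun p => p.2 = w).card := by
    by_contra h
    push_neg at h
    have : A.card ≤ ∑ _w : Fin n, 1 := hsum ▸ sum_le_sum (fun w _ => h w)
    simp at this
    omega
  obtain ⟨w, hw⟩ := h1
  rw [Finset.one_lt_card] at hw
  obtain ⟨p, hp, q, hq, hpq⟩ := hw
  rw [mem_filter] at hp hq
  set u := p.1 with hu'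
  set v := q.1 with hv'
  have hu : G u w := by rw [← hp.2]; exact (memA p).mp hp.1
  have hv : G v w := by rw [← hq.2]; exact (memA q).mp hq.1
  have huv : u ≠ v := fun h => hpq (Prod.ext h (hp.2.trans hq.2.symm))
  have huw : u ≠ w := fun h => hirr w (h ▸ hu)
  have hvw : v ≠ w := fun h => hirr w (h ▸ hv)
  -- Step 2: all arcs touch S
  have touch : ∀ x y, G x y → x = u ∨ x = v ∨ x = w ∨ y = u ∨ y = v ∨ y = w := by
    intro x y hxy
    by_contra h
    push_neg at h
    obtain ⟨h1, h2, h3, h4, h5, h6⟩ := h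
    exact key hirr hfree huv hu hv hxy h1 h2 h3 h4 h5 h6
  set S : Finset (Fin n) := {u, v, w} with hSdef
  have memS : ∀ z, z ∈ S ↔ z = u ∨ z = v ∨ z = w := by intro z; simp [hSdef]
  have touchS : ∀ x y, G x y → x ∈ S ∨ y ∈ S := by
    intro x y hxy
    rcases touch x y hxy with h|h|h|h|h|h <;> simp [memS, h]
  have hScard : S.card = 3 := by
    rw [hSdef, card_insert_of_notMem (by simp [huv, huw]),
      card_insert_of_notMem (by simp [hvw]), card_singleton]
  set e : Fin n → ℕ := fun t => (S.filter fun s => G t s ∨ G s t).card with hedef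
  have he3 : ∀ t, e t ≤ 3 := fun t => le_trans (card_filter_le _ _) hScard.le
  -- decomposition
  set Aint := A.filter (fun p => p.1 ∈ S ∧ p.2 ∈ S) with hAint
  set Across := A.filter (fun p => ¬(p.1 ∈ S ∧ p.2 ∈ S)) with hAcross
  have hsplit : Aint.card + Across.card = A.card :=
    card_filter_add_card_filter_not _
  have hint : Aint.card ≤ 9 := by
    have hsub : Aint ⊆ S ×ˢ S := fun r hr => mem_product.mpr (mem_filter.mp hr).2
    calc Aint.card ≤ (S ×ˢ S).card := card_le_card hsub
    _ = 9 := by rw [card_product, hScard]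
  have hcross : Across.card ≤ ∑ t ∈ Sᶜ, e t := by
    have hmem : ∀ r ∈ Across, (if r.1 ∈ S then r.2 else r.1) ∈ Sᶜ := by
      intro r hr
      rw [mem_filter] at hr
      have hGr := (memA r).mp hr.1
      rcases touchS r.1 r.2 hGr with h|h
      · simp only [if_pos h, mem_compl]
        exact fun h2 => hr.2 ⟨h, h2⟩
      · by_cases h1 : r.1 ∈ S
        · simp only [if_pos h1, mem_compl]
          exact fun h2 => hr.2 ⟨h1, h2⟩
        · simp only [if_neg h1, mem_compl]
          exact h1
    rw [card_eq_sum_card_fiberwise hmem]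
    apply sum_le_sum
    intro t ht
    apply card_le_card_of_injOn (fun r => if r.1 ∈ S then r.1 else r.2)
    · intro r hr
      rw [mem_coe, mem_filter] at hr
      simp only [mem_coe]
      obtain ⟨hr', hft⟩ := hr
      rw [mem_filter] at hr'
      have hGr := (memA r).mp hr'.1
      by_cases h1 : r.1 ∈ S
      · rw [if_pos h1] at hft ⊢
        subst hft
        exact mem_filter.mpr ⟨h1, Or.inr hGr⟩
      · rw [if_neg h1] at hft ⊢
        subst hft
        have h2 : r.2 ∈ S := (touchS r.1 r.2 hGr).resolve_left h1
        exact mem_filter.mpr ⟨h2, Or.inl hGr⟩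
    · intro r hr r' hr' heq
      rw [mem_coe, mem_filter] at hr hr'
      obtain ⟨hr1, hft⟩ := hr
      obtain ⟨hr1', hft'⟩ := hr'
      have hGr := (memA r).mp (mem_filter.mp hr1).1
      have hGr' := (memA r').mp (mem_filter.mp hr1').1
      have heq' : (if r.1 ∈ S then r.1 else r.2) = (if r'.1 ∈ S then r'.1 else r'.2) := heq
      clear heq
      by_cases h1 : r.1 ∈ S <;> by_cases h2 : r'.1 ∈ S
      · rw [if_pos h1] at hft heq'; rw [if_pos h2] at hft' heq'
        exact Prod.ext heq' (hft.trans hft'.symm)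
      · rw [if_pos h1] at hft heq'; rw [if_neg h2] at hft' heq'
        exfalso
        apply hasym r.1 r.2 hGr
        rw [heq', hft, ← hft']
        exact hGr'
      · rw [if_neg h1] at hft heq'; rw [if_pos h2] at hft' heq'
        exfalso
        apply hasym r.1 r.2 hGr
        rw [hft, heq', ← hft']
        exact hGr'
      · rw [if_neg h1] at hft heq'; rw [if_neg h2] at hft' heq'
        exact Prod.ext (hft.trans hft'.symm) heq'
  -- K: outside vertices with e ≥ 2
  set K := Sᶜ.filter (fun t => 2 ≤ e t) with hKdef
  have hScompl : (Sᶜ : Finset (Fin n)).card = n - 3 := by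
    rw [card_compl, hScard, Fintype.card_fin]
  have hsumK : ∑ t ∈ Sᶜ, e t ≤ 3 * K.card + (n - 3) := by
    have hsplit2 := sum_filter_add_sum_filter_not Sᶜ (fun t => 2 ≤ e t) e
    rw [← hKdef] at hsplit2
    have hKle : ∑ t ∈ K, e t ≤ 3 * K.card := by
      calc ∑ t ∈ K, e t ≤ ∑ _t ∈ K, 3 := sum_le_sum (fun t _ => he3 t)
      _ = 3 * K.card := by rw [sum_const, smul_eq_mul, mul_comm]
    have hNle : ∑ t ∈ (Sᶜ.filter fun t => ¬ 2 ≤ e t), e t ≤ n - 3 := by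
      calc ∑ t ∈ (Sᶜ.filter fun t => ¬ 2 ≤ e t), e t
          ≤ ∑ _t ∈ (Sᶜ.filter fun t => ¬ 2 ≤ e t), 1 :=
            sum_le_sum (fun t ht => by have := (mem_filter.mp ht).2; omega)
      _ = (Sᶜ.filter fun t => ¬ 2 ≤ e t).card := by rw [sum_const, smul_eq_mul, mul_one]
      _ ≤ (Sᶜ : Finset (Fin n)).card := card_filter_le _ _
      _ = n - 3 := hScompl
    omega
  have hK5 : 5 ≤ K.card := by omega
  have hKout : ∀ t ∈ K, t ∉ S := fun t ht => mem_compl.mp (mem_filter.mp ht).1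
  have hKe : ∀ t ∈ K, 2 ≤ e t := fun t ht => (mem_filter.mp ht).2
  -- sender uniqueness
  have sender : ∀ t t' s : Fin n, t ∉ S → t' ∉ S → t ≠ t' → s ∈ S →
      G t s → G t' s → False := by
    intro t t' s ht ht' htt' hs hGt hGt'
    have hne : (K \ {t, t'}).Nonempty := by
      rw [← card_pos]
      have h1 := le_card_sdiff ({t, t'} : Finset (Fin n)) K
      have h2 : ({t, t'} : Finset (Fin n)).card ≤ 2 :=
        (card_insert_le _ _).trans (by simp)
      omega
    obtain ⟨t'', ht''⟩ := hne
    rw [mem_sdiff, mem_insert, mem_singleton] at ht''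
    push_neg at ht''
    obtain ⟨hK'', ht''t, ht''t'⟩ := ht''
    have h2e : 2 ≤ e t'' := hKe _ hK''
    rw [hedef] at h2e
    rw [show (2:ℕ) = 1 + 1 from rfl, Nat.add_one_le_iff, Finset.one_lt_card] at h2e
    obtain ⟨s1, hs1, s2, hs2, hs12⟩ := h2e
    rw [mem_filter] at hs1 hs2
    have hpick : ∃ s', s' ∈ S ∧ s' ≠ s ∧ (G t'' s' ∨ G s' t'') := by
      by_cases h : s1 = s
      · exact ⟨s2, hs2.1, fun hh => hs12 (h.trans hh.symm), hs2.2⟩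
      · exact ⟨s1, hs1.1, h, hs1.2⟩
    obtain ⟨s', hs'S, hs's, harc⟩ := hpick
    have ht''out : t'' ∉ S := hKout _ hK''
    have hne1 : t'' ≠ t := ht''t
    have hne2 : t'' ≠ t' := ht''t'
    have hne3 : t'' ≠ s := fun h => ht''out (h ▸ hs)
    have hne4 : s' ≠ t := fun h => ht (h ▸ hs'S)
    have hne5 : s' ≠ t' := fun h => ht' (h ▸ hs'S)
    rcases harc with h|h
    · exact key hirr hfree htt' hGt hGt' h hne1 hne2 hne3 hne4 hne5 hs's
    · exact key hirr hfree htt' hGt hGt' h hne4 hne5 hs's hne1 hne2 hne3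
  -- senders
  set Snd := K.filter (fun t => ∃ s ∈ S, G t s) with hSnddef
  have hSnd3 : Snd.card ≤ 3 := by
    have : Snd.card ≤ S.card := by
      apply card_le_card_of_injOn
        (fun t => if h : ∃ s ∈ S, G t s then h.choose else t)
      · intro t ht
        have h := (mem_filter.mp ht).2
        simp only [dif_pos h]
        exact h.choose_spec.1
      · intro t ht t' ht' heq
        rw [mem_coe, mem_filter] at ht ht'
        have h := ht.2
        have h' := ht'.2
        simp only [dif_pos h, dif_pos h'] at heq
        by_contra hne
        exact sender t t' h'.choose (hKout _ ht.1) (hKout _ ht'.1) hne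
          h'.choose_spec.1 (heq ▸ h.choose_spec.2) h'.choose_spec.2
    omega
  -- D: all-in vertices
  set D := K \ Snd with hDdef
  have hD2 : 1 < D.card := by
    have h1 := le_card_sdiff Snd K
    rw [← hDdef] at h1
    omega
  rw [Finset.one_lt_card] at hD2
  obtain ⟨t1, ht1, t2, ht2, ht1t2⟩ := hD2
  have hDprop : ∀ t ∈ D, t ∉ S ∧ ∃ a b, a ∈ S ∧ b ∈ S ∧ a ≠ b ∧ G a t ∧ G b t := by
    intro t ht
    rw [mem_sdiff] at ht
    obtain ⟨htK, htSnd⟩ := ht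
    have htS : t ∉ S := hKout _ htK
    have hno : ¬ ∃ s ∈ S, G t s := fun h => htSnd (mem_filter.mpr ⟨htK, h⟩)
    push_neg at hno
    have h2e : 2 ≤ e t := hKe _ htK
    rw [hedef] at h2e
    rw [show (2:ℕ) = 1 + 1 from rfl, Nat.add_one_le_iff, Finset.one_lt_card] at h2e
    obtain ⟨s1, hs1, s2, hs2, hs12⟩ := h2e
    rw [mem_filter] at hs1 hs2
    have ha : G s1 t := (hs1.2).resolve_left (hno s1 hs1.1)
    have hb : G s2 t := (hs2.2).resolve_left (hno s2 hs2.1)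
    exact ⟨htS, s1, s2, hs1.1, hs2.1, hs12, ha, hb⟩
  obtain ⟨ht1S, a1, b1, ha1S, hb1S, ha1b1, hGa1, hGb1⟩ := hDprop t1 ht1
  obtain ⟨ht2S, a2, b2, ha2S, hb2S, ha2b2, hGa2, hGb2⟩ := hDprop t2 ht2
  -- in-neighbours of t1 are among {a2, b2}
  have in_t1 : ∀ s, s ∈ S → G s t1 → s = a2 ∨ s = b2 := by
    intro s hs hG
    by_contra h
    push_neg at h
    exact key hirr hfree ha2b2 hGa2 hGb2 hG h.1 h.2
      (fun hh => ht2S (hh ▸ hs)) (fun hh => ht1S (hh ▸ ha2S))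
      (fun hh => ht1S (hh ▸ hb2S)) ht1t2
  have ha1' := in_t1 a1 ha1S hGa1
  have hb1' := in_t1 b1 hb1S hGb1
  have back : ∀ z : Fin n, z = a2 ∨ z = b2 → z = a1 ∨ z = b1 := by
    intro z hz
    rcases ha1' with h|h <;> rcases hb1' with h'|h' <;> rcases hz with rfl|rfl <;>
      first
        | (exact absurd (h.trans h'.symm) ha1b1)
        | (left; exact h.symm)
        | (right; exact h'.symm)
        | (left; exact h'.symm)  -- should not occur
        | (right; exact h.symm)
  -- every arc touches {a1, b1}
  have touch_ab : ∀ x y, G x y → x = a1 ∨ x = b1 ∨ y = a1 ∨ y = b1 := by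
    intro x y hxy
    by_contra hc
    push_neg at hc
    obtain ⟨h1, h2, h3, h4⟩ := hc
    have hT1 : x = t1 ∨ y = t1 := by
      by_contra hh
      push_neg at hh
      exact key hirr hfree ha1b1 hGa1 hGb1 hxy h1 h2 hh.1 h3 h4 hh.2
    have hT2 : x = t2 ∨ y = t2 := by
      by_contra hh
      push_neg at hh
      have hx2 : x ≠ a2 := fun he => (back x (Or.inl he)).elim h1 h2
      have hx2' : x ≠ b2 := fun he => (back x (Or.inr he)).elim h1 h2
      have hy2 : y ≠ a2 := fun he => (back y (Or.inl he)).elim h3 h4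
      have hy2' : y ≠ b2 := fun he => (back y (Or.inr he)).elim h3 h4
      exact key hirr hfree ha2b2 hGa2 hGb2 hxy hx2 hx2' hh.1 hy2 hy2' hh.2
    have hS' := touchS x y hxy
    rcases hT1 with rfl|rfl
    · rcases hT2 with he|rfl
      · exact ht1t2 he
      · rcases hS' with h|h
        · exact ht1S h
        · exact ht2S h
    · rcases hT2 with rfl|he
      · rcases hS' with h|h
        · exact ht2S h
        · exact ht1S h
      · exact ht1t2 he
  -- final counting: every arc touches {a1, b1}, so #A ≤ 2n - 3
  set T : Finset (Fin n × Fin n) :=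
    (univ ×ˢ {a1, b1}) \ {(a1, a1), (a1, b1), (b1, a1)} with hTdef
  have hTcard : T.card = 2 * n - 3 := by
    rw [hTdef, card_sdiff_of_subset]
    · have h3 : ({(a1, a1), (a1, b1), (b1, a1)} :
          Finset (Fin n × Fin n)).card = 3 := by
        rw [card_insert_of_notMem (by simp [ha1b1]),
          card_insert_of_notMem (by simp [ha1b1, Prod.ext_iff]), card_singleton]
      have h2 : ({a1, b1} : Finset (Fin n)).card = 2 := by
        rw [card_insert_of_notMem (by simp [ha1b1]), card_singleton]
      rw [h3, card_product, card_univ, Fintype.card_fin, h2]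
      omega
    · intro z hz
      simp only [mem_insert, mem_singleton] at hz
      rcases hz with rfl|rfl|rfl <;> simp [mem_product]
  have hle : A.card ≤ T.card := by
    apply card_le_card_of_injOn (fun r =>
      if (r.1 = a1 ∨ r.1 = b1) ∧ (r.2 = a1 ∨ r.2 = b1) then (b1, b1)
      else if r.1 = a1 ∨ r.1 = b1 then (r.2, r.1)
      else (r.1, r.2))
    · intro r hr
      have hGr := (memA r).mp hr
      have htr := touch_ab r.1 r.2 hGr
      simp only [mem_coe]
      rw [hTdef, mem_sdiff, mem_product]
      split_ifs with hc1 hc2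
      · refine ⟨⟨mem_univ _, by simp⟩, ?_⟩
        simp only [mem_insert, mem_singleton, Prod.mk.injEq]
        push_neg
        refine ⟨fun h => absurd h.symm ha1b1, fun h => absurd h.symm ha1b1,
          fun _ => ha1b1.symm⟩
      · have hr2 : ¬(r.2 = a1 ∨ r.2 = b1) := fun hh => hc1 ⟨hc2, hh⟩
        refine ⟨⟨mem_univ _, by simpa using hc2⟩, ?_⟩
        simp only [mem_insert, mem_singleton, Prod.mk.injEq]
        push_neg
        exact ⟨fun h => absurd (Or.inl h) hr2, fun h => absurd (Or.inl h) hr2,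
          fun h => absurd (Or.inr h) hr2⟩
      · have hr2 : r.2 = a1 ∨ r.2 = b1 := by
          rcases htr with h|h|h|h
          · exact absurd (Or.inl h) hc2
          · exact absurd (Or.inr h) hc2
          · exact Or.inl h
          · exact Or.inr h
        refine ⟨⟨mem_univ _, by simpa using hr2⟩, ?_⟩
        simp only [mem_insert, mem_singleton, Prod.mk.injEq]
        push_neg
        exact ⟨fun h => absurd (Or.inl h) hc2, fun h => absurd (Or.inl h) hc2,
          fun h => absurd (Or.inr h) hc2⟩
    · intro r hr r' hr' heq
      rw [mem_coe] at hr hr'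
      have hGr := (memA r).mp hr
      have hGr' := (memA r').mp hr'
      have hirr1 : r.1 ≠ r.2 := fun h => hirr r.2 (h ▸ hGr)
      have hirr2 : r'.1 ≠ r'.2 := fun h => hirr r'.2 (h ▸ hGr')
      have heq' :
          (if (r.1 = a1 ∨ r.1 = b1) ∧ (r.2 = a1 ∨ r.2 = b1) then ((b1, b1) : Fin n × Fin n)
            else if r.1 = a1 ∨ r.1 = b1 then (r.2, r.1)
            else (r.1, r.2))
          = (if (r'.1 = a1 ∨ r'.1 = b1) ∧ (r'.2 = a1 ∨ r'.2 = b1) then (b1, b1)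
            else if r'.1 = a1 ∨ r'.1 = b1 then (r'.2, r'.1)
            else (r'.1, r'.2)) := heq
      clear heq
      split_ifs at heq' with p1 p2 p3 p4 p5 p6 p7 p8
      · -- both arcs inside {a1, b1}
        obtain ⟨hp1, hp2⟩ := p1
        obtain ⟨hq1, hq2⟩ := p2
        rcases hp1 with hp1|hp1 <;> rcases hp2 with hp2|hp2 <;>
          rcases hq1 with hq1|hq1 <;> rcases hq2 with hq2|hq2 <;>
          first
            | (exact absurd (hp1.trans hp2.symm) hirr1)
            | (exact absurd (hq1.trans hq2.symm) hirr2)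
            | (exact Prod.ext (hp1.trans hq1.symm) (hp2.trans hq2.symm))
            | (exfalso
               apply hasym r.1 r.2 hGr
               rw [hp1, hp2, ← hq1, ← hq2]
               exact hGr')
      · exfalso
        rw [Prod.mk.injEq] at heq'
        exact p2 ⟨p3, Or.inr heq'.1.symm⟩
      · exfalso
        rw [Prod.mk.injEq] at heq'
        exact p3 (Or.inr heq'.1.symm)
      · exfalso
        rw [Prod.mk.injEq] at heq'
        exact p1 ⟨p4, Or.inr heq'.1⟩
      · rw [Prod.mk.injEq] at heq'
        exact Prod.ext heq'.2 heq'.1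
      · exfalso
        rw [Prod.mk.injEq] at heq'
        apply hasym r.1 r.2 hGr
        rw [heq'.1, heq'.2]
        exact hGr'
      · exfalso
        rw [Prod.mk.injEq] at heq'
        exact p4 (Or.inr heq'.1)
      · exfalso
        rw [Prod.mk.injEq] at heq'
        apply hasym r.1 r.2 hGr
        rw [heq'.2, heq'.1]
        exact hGr'
      · rw [Prod.mk.injEq] at heq'
        exact Prod.ext heq'.1 heq'.2
  omega

lemma construction {n : ℕ} (hn : 30 ≤ n) :
    ∃ G : Fin n → Fin n → Prop,
      (∀ v, ¬ G v v) ∧ (∀ u v, G u v → ¬ G v u) ∧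
      ¬ Copies antiP3plusArc G ∧ {p : Fin n × Fin n | G p.1 p.2}.ncard = 2 * n - 3 := by
  classical
  set a : Fin n := ⟨0, by omega⟩ with ha
  set b : Fin n := ⟨1, by omega⟩ with hb
  have hab : a ≠ b := by simp [ha, hb, Fin.ext_iff]
  refine ⟨fun i j => (i = a ∧ j ≠ a) ∨ (i = b ∧ j ≠ a ∧ j ≠ b), ?_, ?_, ?_, ?_⟩
  · rintro v (⟨rfl, h⟩ | ⟨rfl, h1, h2⟩) <;> simp_all
  · rintro u v (⟨rfl, h⟩ | ⟨rfl, h1, h2⟩) (⟨rfl, h'⟩ | ⟨rfl, h1', h2'⟩) <;> simp_all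
  · rintro ⟨f, hinj, hmap⟩
    have h0 := hmap 0 2 (Or.inl ⟨rfl, rfl⟩)
    have h1 := hmap 1 2 (Or.inr (Or.inl ⟨rfl, rfl⟩))
    have h3 := hmap 3 4 (Or.inr (Or.inr ⟨rfl, rfl⟩))
    have e01 : f 0 ≠ f 1 := fun h => by simpa using hinj h
    have e03 : f 0 ≠ f 3 := fun h => by simpa using hinj h
    have e13 : f 1 ≠ f 3 := fun h => by simpa using hinj h
    have m0 : f 0 = a ∨ f 0 = b := by tauto
    have m1 : f 1 = a ∨ f 1 = b := by tauto
    have m3 : f 3 = a ∨ f 3 = b := by tauto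
    rcases m0 with h|h <;> rcases m1 with h'|h' <;> rcases m3 with h''|h'' <;>
      simp_all
  · have hset : {p : Fin n × Fin n | (p.1 = a ∧ p.2 ≠ a) ∨ (p.1 = b ∧ p.2 ≠ a ∧ p.2 ≠ b)}
        = ↑(({a} ×ˢ (univ \ {a})) ∪ ({b} ×ˢ (univ \ {a, b})) : Finset (Fin n × Fin n)) := by
      ext ⟨i, j⟩
      simp only [Set.mem_setOf_eq, coe_union, Set.mem_union, coe_product, Set.mem_prod,
        coe_sdiff, Set.mem_diff, coe_singleton, Set.mem_singleton_iff, coe_insert,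
        Set.mem_insert_iff, coe_univ, Set.mem_univ, true_and, coe_pair]
      tauto
    rw [hset, Set.ncard_coe_finset]
    rw [card_union_of_disjoint, card_product, card_product, card_singleton,
      card_sdiff_of_subset (subset_univ _), card_sdiff_of_subset (subset_univ _), card_singleton,
      card_univ, Fintype.card_fin]
    · have h2 : ({a, b} : Finset (Fin n)).card = 2 := by
        rw [card_insert_of_notMem (by simp [hab]), card_singleton]
      simp only [h2, card_singleton, one_mul]; omega
    · rw [disjoint_left]
      rintro ⟨i, j⟩ hij hij'
      simp only [mem_product, mem_singleton] at hij hij'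
      exact hab (hij.1 ▸ hij'.1 ▸ rfl)


/-- for sufficiently large `n`, `exo(n, F) = 2n - 3`. -/
theorem stmt_12 : ∃ N : ℕ, ∀ n ≥ N, exo n antiP3plusArc = 2 * n - 3 := by
  refine ⟨30, fun n hn => ?_⟩
  have hub : ∀ m ∈ {m : ℕ | ∃ G : Fin n → Fin n → Prop,
      (∀ v, ¬ G v v) ∧ (∀ u v, G u v → ¬ G v u) ∧
      ¬ Copies antiP3plusArc G ∧ {p : Fin n × Fin n | G p.1 p.2}.ncard = m},
      m ≤ 2 * n - 3 := by
    rintro m ⟨G, hirr, hasym, hfree, hcard⟩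
    exact hcard ▸ upper hn hirr hasym hfree
  have hmem : 2 * n - 3 ∈ {m : ℕ | ∃ G : Fin n → Fin n → Prop,
      (∀ v, ¬ G v v) ∧ (∀ u v, G u v → ¬ G v u) ∧
      ¬ Copies antiP3plusArc G ∧ {p : Fin n × Fin n | G p.1 p.2}.ncard = m} := by
    obtain ⟨G, h1, h2, h3, h4⟩ := construction hn
    exact ⟨G, h1, h2, h3, h4⟩
  refine le_antisymm (csSup_le ⟨_, hmem⟩ hub) (le_csSup ⟨2 * n - 3, hub⟩ hmem)
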